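/- Sequential transient length for SPM from (n): the number of sequential rule applications needed to go from (n) to the fixed point equals t_seq = (1/6)(p+1)p(p-1) + (1/2)k(2p+1-k), where (p,k) is the integer-sum decomposition of n. Equivalently, t_seq = ∑ over all grains in the fixed point of (column index − 1): t_seq = ∑_{i=1}^{L} (i-1)·Π_i where Π is the fixed point configuration and L its length. -/
import Mathlib


/-- The SPM rule applied at column `i` (0-indexed). -/
def SPMStep (i : ℕ) (a a' : ℕ → ℕ) : Prop :=
  a (i + 1) + 2 ≤ a i ∧ a' i = a i - 1 ∧ a' (i + 1) = a (i + 1) + 1 ∧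
    ∀ j, j ≠ i → j ≠ i + 1 → a' j = a j

/-- The SPM fixed point `Π` of the configuration `(n)`, where `n = k + p(p+1)/2`,
`0 ≤ k ≤ p`. -/
def PiConf (p k : ℕ) : ℕ → ℕ :=
  fun i => if k = 0 then p - i else if i ≤ p - k then p - i else p + 1 - i

lemma pi_zero (p k j : ℕ) (h : p < j) : PiConf p k j = 0 := by
  unfold PiConf; split_ifs <;> omega

lemma base_sum (p : ℕ) : 6 * ∑ i ∈ Finset.range (p + 1), i * (p - i) + p * (p + 1) =
    p * p * (p + 1) := by
  induction p with
  | zero => simp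
  | succ p ih =>
    rw [Finset.sum_range_succ]
    have h1 : ∀ i ∈ Finset.range (p + 1), i * (p + 1 - i) = i * (p - i) + i := by
      intro i hi
      rw [Finset.mem_range] at hi
      have : p + 1 - i = (p - i) + 1 := by omega
      rw [this]; ring
    rw [Finset.sum_congr rfl h1, Finset.sum_add_distrib]
    have g : (∑ i ∈ Finset.range (p + 1), i) * 2 = (p + 1) * p := by
      simpa using Finset.sum_range_id_mul_two (p + 1)
    simp only [Nat.sub_self, Nat.mul_zero, Nat.add_zero]
    nlinarith [ih, g]

lemma pi_succ (p k : ℕ) (h : k + 1 ≤ p) (i : ℕ) :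
    PiConf p (k + 1) i = PiConf p k i + (if i = p - k then 1 else 0) := by
  simp only [PiConf]; split_ifs <;> try contradiction
  all_goals omega

lemma sum_pi (p k : ℕ) (hk : k ≤ p) :
    6 * ∑ i ∈ Finset.range (p + 1), i * PiConf p k i =
      (p + 1) * p * (p - 1) + 3 * (k * (2 * p + 1 - k)) := by
  induction k with
  | zero =>
    have : ∀ i, PiConf p 0 i = p - i := fun i => by simp [PiConf]
    simp only [this, Nat.mul_zero, Nat.zero_mul, Nat.add_zero]
    have := base_sum p
    rcases Nat.eq_zero_or_pos p with rfl | hp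
    · simp
    · obtain ⟨q, rfl⟩ : ∃ q, p = q + 1 := ⟨p - 1, by omega⟩
      simp only [Nat.add_sub_cancel]
      nlinarith [this]
  | succ k ih =>
    have hk' : k ≤ p := by omega
    have ihs := ih hk'
    have hdiff : ∀ i ∈ Finset.range (p + 1),
        i * PiConf p (k + 1) i = i * PiConf p k i + (if i = p - k then i else 0) := by
      intro i _
      rw [pi_succ p k hk i]
      split_ifs with h <;> ring
    rw [Finset.sum_congr rfl hdiff, Finset.sum_add_distrib, Finset.sum_ite_eq']
    rw [if_pos (by rw [Finset.mem_range]; omega)]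
    obtain ⟨m, rfl⟩ : ∃ m, p = k + 1 + m := ⟨p - k - 1, by omega⟩
    have e1 : k + 1 + m - k = m + 1 := by omega
    have e2 : 2 * (k + 1 + m) + 1 - k = k + 2 * m + 3 := by omega
    have e3 : 2 * (k + 1 + m) + 1 - (k + 1) = k + 2 * m + 2 := by omega
    have e4 : k + 1 + m - 1 = k + m := by omega
    rw [e1, e3, e4]
    rw [e2, e4] at ihs
    nlinarith [ihs]

theorem spm_sequential_transient_length (n p k T : ℕ) (c : ℕ → ℕ → ℕ)
    (hk : k ≤ p) (hn : n = k + p * (p + 1) / 2)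
    (h0 : c 0 = fun j => if j = 0 then n else 0)
    (hstep : ∀ t < T, ∃ i, SPMStep i (c t) (c (t + 1)))
    (hT : c T = PiConf p k) :
    6 * T = (p + 1) * p * (p - 1) + 3 * (k * (2 * p + 1 - k)) ∧
      T = ∑ i ∈ Finset.range (p + 1), i * PiConf p k i := by
  set N := T + p + 2 with hN
  have inv : ∀ t, t ≤ T → (∀ j, t < j → c t j = 0) ∧
      ∑ j ∈ Finset.range N, j * c t j = t := by
    intro t
    induction t with
    | zero =>
      intro _
      constructor
      · intro j hj; rw [h0]; simp; omega
      · apply Finset.sum_eq_zero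
        intro j _
        rw [h0]
        by_cases h : j = 0 <;> simp [h]
    | succ t ih =>
      intro ht
      have iht := ih (by omega)
      obtain ⟨i, h1, h2, h3, h4⟩ := hstep t (by omega)
      have hit : i ≤ t := by
        by_contra h
        have := iht.1 i (by omega)
        omega
      constructor
      · intro j hj
        rw [h4 j (by omega) (by omega)]
        exact iht.1 j (by omega)
      · have hfg : ∀ j ∈ Finset.range N,
            j * c (t + 1) j + (if j = i then j else 0) =
            j * c t j + (if j = i + 1 then j else 0) := by
          intro j _
          rcases eq_or_ne j i with rfl | hji
          · obtain ⟨d, hd⟩ : ∃ d, c t j = d + 1 := ⟨c t j - 1, by omega⟩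
            rw [h2, hd, if_pos rfl, if_neg (by omega)]
            simp [Nat.add_sub_cancel]; ring
          · rcases eq_or_ne j (i + 1) with rfl | hji1
            · rw [h3, if_neg hji, if_pos rfl]; ring
            · rw [h4 j hji hji1, if_neg hji, if_neg hji1]
        have hs := Finset.sum_congr rfl hfg
        rw [Finset.sum_add_distrib, Finset.sum_add_distrib,
          Finset.sum_ite_eq', Finset.sum_ite_eq',
          if_pos (by rw [Finset.mem_range]; omega),
          if_pos (by rw [Finset.mem_range]; omega)] at hs
        have := iht.2
        omega
  have hsum : ∑ j ∈ Finset.range N, j * PiConf p k j = T := by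
    rw [← hT]; exact (inv T le_rfl).2
  have hrestrict : ∑ j ∈ Finset.range N, j * PiConf p k j =
      ∑ j ∈ Finset.range (p + 1), j * PiConf p k j := by
    symm
    apply Finset.sum_subset
    · apply Finset.range_subset_range.mpr; omega
    · intro x _ hx
      rw [Finset.mem_range] at hx
      rw [pi_zero p k x (by omega), Nat.mul_zero]
  have hTeq : T = ∑ i ∈ Finset.range (p + 1), i * PiConf p k i := by
    rw [← hrestrict, hsum]
  exact ⟨by rw [hTeq]; exact sum_pi p k hk, hTeq⟩
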